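/- Every set partition A of [n] admits a unique decomposition A = A^{(1)} | A^{(2)} | ... | A^{(d)} where each A^{(i)} is an atomic set partition and | denotes the shifted concatenation of set partitions. -/

import Mathlib

open scoped Classical
noncomputable section

/-- The ground set `[n] = {1, …, n}`. -/
def ground (n : ℕ) : Finset ℕ := Finset.Icc 1 n

/-- `A` is a set partition of `[n]`. -/
def IsSetPartition (n : ℕ) (A : Finset (Finset ℕ)) : Prop :=
  (∀ B ∈ A, B.Nonempty) ∧
  (∀ B ∈ A, ∀ C ∈ A, B ≠ C → Disjoint B C) ∧
  A.sup id = ground n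

/-- Shift every entry of every part by `n`. -/
def shiftP (n : ℕ) (A : Finset (Finset ℕ)) : Finset (Finset ℕ) :=
  A.image (fun B => B.image (· + n))

/-- Shifted concatenation `A|B` of a set partition `A ⊢ [n]` with `B`. -/
def concatP (n : ℕ) (A B : Finset (Finset ℕ)) : Finset (Finset ℕ) :=
  A ∪ shiftP n B

/-- `A` is an atomic set partition of `[n]`: nonempty and not a nontrivial
shifted concatenation. -/
def AtomicP (n : ℕ) (A : Finset (Finset ℕ)) : Prop :=
  IsSetPartition n A ∧ 0 < n ∧
  ¬ ∃ k B C, 0 < k ∧ k < n ∧ IsSetPartition k B ∧ IsSetPartition (n - k) C ∧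
      A = concatP k B C

/-- Shifted concatenation of a list of (size, set partition) pairs. -/
def concatListP : List (ℕ × Finset (Finset ℕ)) → ℕ × Finset (Finset ℕ)
  | [] => (0, ∅)
  | p :: L => ((concatListP L).1 + p.1, concatP p.1 p.2 (concatListP L).2)

/-- `L` is the atomic factorization `A^!` of the set partition `A ⊢ [n]`. -/
def AtomicFactorization (n : ℕ) (A : Finset (Finset ℕ))
    (L : List (ℕ × Finset (Finset ℕ))) : Prop :=
  (∀ p ∈ L, AtomicP p.1 p.2) ∧ concatListP L = (n, A)

/-- The Bell number: the number of set partitions of `[n]`. -/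
def bell (n : ℕ) : ℕ := Nat.card {A : Finset (Finset ℕ) // IsSetPartition n A}

/-- Stirling numbers of the second kind: set partitions of `[n]` into `k` parts. -/
def stirling2 (n k : ℕ) : ℕ :=
  Nat.card {A : Finset (Finset ℕ) // IsSetPartition n A ∧ A.card = k}

/-- The number of atomic set partitions of `[n]` into `k` parts. -/
def atomCount (n k : ℕ) : ℕ :=
  Nat.card {A : Finset (Finset ℕ) // AtomicP n A ∧ A.card = k}

/-- The number of atomic set partitions of `[n]`. -/
def atomCount' (n : ℕ) : ℕ := Nat.card {A : Finset (Finset ℕ) // AtomicP n A}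

/-- Refinement order: `A ≤ B` iff every part of `A` is contained in a part of `B`. -/
def refines (A B : Finset (Finset ℕ)) : Prop := ∀ a ∈ A, ∃ b ∈ B, a ⊆ b

/-- The meet `A ∧ B` of two set partitions. -/
def meetP (A B : Finset (Finset ℕ)) : Finset (Finset ℕ) :=
  ((A ×ˢ B).image fun p => p.1 ∩ p.2).filter (·.Nonempty)

/-- The set partition `{[n]}` with a single part (empty if `n = 0`). -/
def onePartP (n : ℕ) : Finset (Finset ℕ) := if n = 0 then ∅ else {ground n}

/-- The finite set of set partitions of `[n]` satisfying a predicate `P`. -/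
def SPs (n : ℕ) (P : Finset (Finset ℕ) → Prop) : Finset (Finset (Finset ℕ)) :=
  (ground n).powerset.powerset.filter fun A => IsSetPartition n A ∧ P A

/-- Covering relation for `≤_*`: `B` covers `A` if `B` is obtained from `A` by merging two
parts `a, a'` with every element of `a` smaller than every element of `a'`. -/
def coverStar (A B : Finset (Finset ℕ)) : Prop :=
  ∃ a ∈ A, ∃ a' ∈ A, a ≠ a' ∧ (∀ x ∈ a, ∀ y ∈ a', x < y) ∧
    B = insert (a ∪ a') ((A.erase a).erase a')

/-- The order `≤_*` on set partitions. -/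
def leStar : Finset (Finset ℕ) → Finset (Finset ℕ) → Prop :=
  Relation.ReflTransGen coverStar

/-- Restriction `A↓_S` of a set partition to the entries in `S`. -/
def restrictP (A : Finset (Finset ℕ)) (S : Finset ℕ) : Finset (Finset ℕ) :=
  (A.image (· ∩ S)).filter (·.Nonempty)

/-- The standardization map of a finite set `S`: sends the `i`-th smallest element of `S`
to `i` (1-indexed). -/
def stMap (S : Finset ℕ) (x : ℕ) : ℕ := (S.filter (· ≤ x)).card

/-- Standardization of a set partition: relabel its entries to `{1,…,m}` preserving order. -/
def stdP (A : Finset (Finset ℕ)) : Finset (Finset ℕ) :=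
  A.image fun b => b.image (stMap (A.sup id))

/-- The map raising `{1,…,|S|}` order-preservingly onto `S`. -/
def raiseMap (S : Finset ℕ) (x : ℕ) : ℕ := (S.sort (· ≤ ·)).getD (x - 1) 0

/-- `A↑_S`: raise the entries of `A` order-preservingly so the ground set becomes `S`. -/
def raiseP (S : Finset ℕ) (A : Finset (Finset ℕ)) : Finset (Finset ℕ) :=
  A.image fun b => b.image (raiseMap S)

/-- `IsShuffle l₁ l₂ l`: `l` is a shuffle (interleaving) of `l₁` and `l₂`. -/
inductive IsShuffle {α : Type*} : List α → List α → List α → Prop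
  | nil : IsShuffle [] [] []
  | left {a : α} {l₁ l₂ l : List α} : IsShuffle l₁ l₂ l → IsShuffle (a :: l₁) l₂ (a :: l)
  | right {a : α} {l₁ l₂ l : List α} : IsShuffle l₁ l₂ l → IsShuffle l₁ (a :: l₂) (a :: l)

/-- A word is Lyndon if it is nonempty and lexicographically strictly smaller than all of
its proper cyclic rotations. -/
def LyndonWord {α : Type*} (lt : α → α → Prop) (w : List α) : Prop :=
  w ≠ [] ∧ ∀ i, 0 < i → i < w.length → List.Lex lt w (w.rotate i)

/-- A set partition is Lyndon (with respect to a total order `lt` on atomic set partitions)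
if its atomic factorization is a Lyndon word. -/
def LyndonPartition (lt : ℕ × Finset (Finset ℕ) → ℕ × Finset (Finset ℕ) → Prop)
    (n : ℕ) (A : Finset (Finset ℕ)) : Prop :=
  ∃ L, AtomicFactorization n A L ∧ LyndonWord lt L

/-! ### Set compositions -/

/-- `Φ` is a set composition of `[n]`: an ordered sequence of nonempty pairwise disjoint
sets whose union is `[n]`. -/
def IsSetComposition (n : ℕ) (Φ : List (Finset ℕ)) : Prop :=
  (∀ B ∈ Φ, B.Nonempty) ∧ Φ.Pairwise Disjoint ∧ Φ.foldr (· ∪ ·) ∅ = ground n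

/-- Shift every entry of every part of a set composition by `n`. -/
def shiftC (n : ℕ) (Φ : List (Finset ℕ)) : List (Finset ℕ) :=
  Φ.map (·.image (· + n))

/-- Shifted concatenation `Φ|Ψ` of set compositions, `Φ ⊨ [n]`. -/
def concatC (n : ℕ) (Φ Ψ : List (Finset ℕ)) : List (Finset ℕ) := Φ ++ shiftC n Ψ

/-- An atomic set composition: nonempty and not a nontrivial shifted concatenation. -/
def AtomicC (n : ℕ) (Φ : List (Finset ℕ)) : Prop :=
  IsSetComposition n Φ ∧ 0 < n ∧
  ¬ ∃ k Ψ Γ, 0 < k ∧ k < n ∧ IsSetComposition k Ψ ∧ IsSetComposition (n - k) Γ ∧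
      Φ = concatC k Ψ Γ

/-- Shifted concatenation of a list of (size, set composition) pairs. -/
def concatListC : List (ℕ × List (Finset ℕ)) → ℕ × List (Finset ℕ)
  | [] => (0, [])
  | p :: L => ((concatListC L).1 + p.1, concatC p.1 p.2 (concatListC L).2)

/-- `L` is the atomic factorization `Φ^!` of the set composition `Φ ⊨ [n]`. -/
def AtomicFactorizationC (n : ℕ) (Φ : List (Finset ℕ))
    (L : List (ℕ × List (Finset ℕ))) : Prop :=
  (∀ p ∈ L, AtomicC p.1 p.2) ∧ concatListC L = (n, Φ)

/-- Covering relation for `≤_*` on set compositions: merge two adjacent parts `a, b` with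
every element of `a` smaller than every element of `b`. -/
def coverStarC (Φ Ψ : List (Finset ℕ)) : Prop :=
  ∃ L₁ a b L₂, Φ = L₁ ++ a :: b :: L₂ ∧ (∀ x ∈ a, ∀ y ∈ b, x < y) ∧
    Ψ = L₁ ++ (a ∪ b) :: L₂

/-- The order `≤_*` on set compositions. -/
def leStarC : List (Finset ℕ) → List (Finset ℕ) → Prop :=
  Relation.ReflTransGen coverStarC

/-- The meet operation `Φ ∧ Ψ` on set compositions: the nonempty intersections
`Φ_i ∩ Ψ_j` in lexicographic order of `(i, j)`. -/
def meetC (Φ Ψ : List (Finset ℕ)) : List (Finset ℕ) :=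
  (Φ.flatMap fun a => Ψ.map fun b => a ∩ b).filter (·.Nonempty)

/-- The one-part set composition `([n])` (empty if `n = 0`). -/
def onePartC (n : ℕ) : List (Finset ℕ) := if n = 0 then [] else [ground n]

/-- Lists of length `k` with all entries in `s`. -/
def listsOfLen (s : Finset (Finset ℕ)) : ℕ → Finset (List (Finset ℕ))
  | 0 => {[]}
  | k + 1 => (s ×ˢ listsOfLen s k).image fun p => p.1 :: p.2

/-- The finite set of set compositions of `[n]` satisfying a predicate `P`. -/
def SCs (n : ℕ) (P : List (Finset ℕ) → Prop) : Finset (List (Finset ℕ)) :=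
  ((Finset.range (n + 1)).biUnion fun k => listsOfLen (ground n).powerset k).filter
    fun Φ => IsSetComposition n Φ ∧ P Φ

/-- `Φ↑_S`: raise the entries of a set composition order-preservingly into `S`. -/
def raiseC (S : Finset ℕ) (Φ : List (Finset ℕ)) : List (Finset ℕ) :=
  Φ.map (·.image (raiseMap S))

/-- Standardization of a set composition. -/
def stdC (Φ : List (Finset ℕ)) : List (Finset ℕ) :=
  Φ.map (·.image (stMap (Φ.foldr (· ∪ ·) ∅)))

/-- `α(Φ)`: the composition of part sizes of `Φ`. -/
def alphaC (Φ : List (Finset ℕ)) : List ℕ := Φ.map Finset.card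

/-- The order `≤_#` on set compositions: `Φ ≤_# Ψ` iff `α(Φ) = α(Ψ)` and each atomic factor
of `Φ` is the standardization of the corresponding consecutive block of parts of `Ψ`. -/
def leSharp (Φ Ψ : List (Finset ℕ)) : Prop :=
  alphaC Φ = alphaC Ψ ∧
  ∃ (L : List (ℕ × List (Finset ℕ))) (Bs : List (List (Finset ℕ))),
    (∀ p ∈ L, AtomicC p.1 p.2) ∧ (concatListC L).2 = Φ ∧
    Ψ = Bs.flatten ∧ List.Forall₂ (fun b (l : ℕ × List (Finset ℕ)) => stdC b = l.2) Bs L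

/-! ### Index types -/

/-- Set partitions with their sizes. -/
abbrev SPIdx := {x : ℕ × Finset (Finset ℕ) // IsSetPartition x.1 x.2}

/-- Atomic set partitions with their sizes. -/
abbrev AtomIdx := {x : ℕ × Finset (Finset ℕ) // AtomicP x.1 x.2}

/-- Set compositions with their sizes. -/
abbrev SCIdx := {x : ℕ × List (Finset ℕ) // IsSetComposition x.1 x.2}

/-- Atomic set compositions with their sizes. -/
abbrev AtomCIdx := {x : ℕ × List (Finset ℕ) // AtomicC x.1 x.2}

/-! ### Auxiliary lemmas for the unique factorization theorem -/

section AuxFact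

variable {n k m : ℕ} {A B C : Finset (Finset ℕ)}

lemma part_subset_ground (hA : IsSetPartition n A) {b : Finset ℕ} (hb : b ∈ A) :
    b ⊆ ground n := by
  rw [← hA.2.2]; exact Finset.le_sup (f := id) hb

lemma part_mem_bounds (hA : IsSetPartition n A) {b : Finset ℕ} (hb : b ∈ A) {x : ℕ}
    (hx : x ∈ b) : 1 ≤ x ∧ x ≤ n := by
  have := part_subset_ground hA hb hx
  exact Finset.mem_Icc.1 this

lemma eq_empty_of_isSetPartition_zero (hA : IsSetPartition 0 A) : A = ∅ := by
  ext b
  simp only [Finset.notMem_empty, iff_false]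
  intro hb
  obtain ⟨x, hx⟩ := hA.1 b hb
  have := part_mem_bounds hA hb hx
  omega

/-- Every part of `A` lies entirely at or below `k`, or entirely above `k`. -/
def SplitAt (k : ℕ) (A : Finset (Finset ℕ)) : Prop :=
  ∀ b ∈ A, (∀ x ∈ b, x ≤ k) ∨ (∀ x ∈ b, k < x)

lemma mem_concatP {b : Finset ℕ} :
    b ∈ concatP k B C ↔ b ∈ B ∨ ∃ c ∈ C, c.image (· + k) = b := by
  simp [concatP, shiftP, Finset.mem_union, Finset.mem_image]

lemma mem_shiftP_elem (hC : IsSetPartition m C) {b : Finset ℕ}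
    (hb : b ∈ shiftP k C) {x : ℕ} (hx : x ∈ b) : k < x ∧ x ≤ k + m := by
  simp only [shiftP, Finset.mem_image] at hb
  obtain ⟨c, hc, rfl⟩ := hb
  simp only [Finset.mem_image] at hx
  obtain ⟨y, hy, rfl⟩ := hx
  have := part_mem_bounds hC hc hy
  omega

lemma splitAt_concatP (hB : IsSetPartition k B) (hC : IsSetPartition m C) :
    SplitAt k (concatP k B C) := by
  intro b hb
  rcases Finset.mem_union.1 hb with h | h
  · exact Or.inl fun x hx => (part_mem_bounds hB h hx).2
  · exact Or.inr fun x hx => (mem_shiftP_elem hC h hx).1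

lemma unshift_shiftP : (shiftP k C).image (fun b => b.image (· - k)) = C := by
  rw [shiftP, Finset.image_image]
  have : ∀ c : Finset ℕ, ((c.image (· + k)).image (· - k)) = c := by
    intro c
    rw [Finset.image_image]
    ext x
    simp
  conv_rhs => rw [← Finset.image_id (s := C)]
  exact Finset.image_congr fun c _ => this c

lemma isSetPartition_concatP (hB : IsSetPartition k B) (hC : IsSetPartition m C) :
    IsSetPartition (k + m) (concatP k B C) := by
  refine ⟨?_, ?_, ?_⟩
  · intro b hb
    rcases mem_concatP.1 hb with h | ⟨c, hc, rfl⟩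
    · exact hB.1 b h
    · exact (hC.1 c hc).image _
  · intro b hb c hc hne
    rcases Finset.mem_union.1 hb with h1 | h1 <;> rcases Finset.mem_union.1 hc with h2 | h2
    · exact hB.2.1 b h1 c h2 hne
    · rw [Finset.disjoint_left]
      intro x hx hx'
      have := (part_mem_bounds hB h1 hx).2
      have := (mem_shiftP_elem hC h2 hx').1
      omega
    · rw [Finset.disjoint_left]
      intro x hx hx'
      have := (part_mem_bounds hB h2 hx').2
      have := (mem_shiftP_elem hC h1 hx).1
      omega
    · simp only [shiftP, Finset.mem_image] at h1 h2
      obtain ⟨b', hb', rfl⟩ := h1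
      obtain ⟨c', hc', rfl⟩ := h2
      have hne' : b' ≠ c' := by rintro rfl; exact hne rfl
      have := hB.2.1
      rw [Finset.disjoint_left]
      intro x hx hx'
      simp only [Finset.mem_image] at hx hx'
      obtain ⟨y, hy, rfl⟩ := hx
      obtain ⟨z, hz, hzy⟩ := hx'
      have : z = y := by omega
      subst this
      exact Finset.disjoint_left.1 (hC.2.1 b' hb' c' hc' hne') hy hz
  · ext x
    simp only [Finset.mem_sup, id, concatP, Finset.mem_union]
    constructor
    · rintro ⟨b, hb | hb, hx⟩
      · have := part_mem_bounds hB hb hx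
        simp only [ground, Finset.mem_Icc]; omega
      · have := mem_shiftP_elem hC hb hx
        simp only [ground, Finset.mem_Icc]; omega
    · intro hx
      simp only [ground, Finset.mem_Icc] at hx
      by_cases hxk : x ≤ k
      · have : x ∈ ground k := by simp [ground, Finset.mem_Icc]; omega
        rw [← hB.2.2] at this
        obtain ⟨b, hb, hxb⟩ := Finset.mem_sup.1 this
        exact ⟨b, Or.inl hb, hxb⟩
      · have : x - k ∈ ground m := by simp [ground, Finset.mem_Icc]; omega
        rw [← hC.2.2] at this
        obtain ⟨c, hc, hxc⟩ := Finset.mem_sup.1 this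
        refine ⟨c.image (· + k), Or.inr ?_, ?_⟩
        · simp only [shiftP, Finset.mem_image]; exact ⟨c, hc, rfl⟩
        · simp only [Finset.mem_image]
          exact ⟨x - k, hxc, by omega⟩

/-- The decomposition extracted from a split point. -/
lemma split_decomp (hA : IsSetPartition n A) (hS : SplitAt k A) (hk : 0 < k) (hkn : k ≤ n) :
    ∃ B C, IsSetPartition k B ∧ IsSetPartition (n - k) C ∧ A = concatP k B C := by
  classical
  set B : Finset (Finset ℕ) := A.filter (fun b => ∀ x ∈ b, x ≤ k) with hBdef
  set U : Finset (Finset ℕ) := A.filter (fun b => ∀ x ∈ b, k < x) with hUdef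
  set C : Finset (Finset ℕ) := U.image (fun b => b.image (· - k)) with hCdef
  have hBsub : B ⊆ A := Finset.filter_subset _ _
  have hUsub : U ⊆ A := Finset.filter_subset _ _
  have hUshift : shiftP k C = U := by
    rw [hCdef, shiftP, Finset.image_image]
    have : ∀ b ∈ U, ((b.image (· - k)).image (· + k)) = b := by
      intro b hb
      rw [Finset.image_image]
      have hgt : ∀ x ∈ b, k < x := (Finset.mem_filter.1 hb).2
      conv_rhs => rw [← Finset.image_id (s := b)]
      refine Finset.image_congr fun x hx => ?_
      have := hgt x hx
      simp only [Function.comp, id]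
      omega
    conv_rhs => rw [← Finset.image_id (s := U)]
    exact Finset.image_congr fun b hb => this b hb
  have hBpart : IsSetPartition k B := by
    refine ⟨fun b hb => hA.1 b (hBsub hb), fun b hb c hc => hA.2.1 b (hBsub hb) c (hBsub hc), ?_⟩
    ext x
    simp only [Finset.mem_sup, id, hBdef, Finset.mem_filter, ground, Finset.mem_Icc]
    constructor
    · rintro ⟨b, ⟨hb, hle⟩, hx⟩
      have := part_mem_bounds hA hb hx
      exact ⟨this.1, hle x hx⟩
    · rintro ⟨h1, h2⟩
      have hx : x ∈ ground n := by simp [ground, Finset.mem_Icc]; omega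
      rw [← hA.2.2] at hx
      obtain ⟨b, hb, hxb⟩ := Finset.mem_sup.1 hx
      rcases hS b hb with h | h
      · exact ⟨b, ⟨hb, h⟩, hxb⟩
      · exact absurd (h x hxb) (by omega)
  have hCpart : IsSetPartition (n - k) C := by
    refine ⟨?_, ?_, ?_⟩
    · intro b hb
      rw [hCdef] at hb
      simp only [Finset.mem_image] at hb
      obtain ⟨c, hc, rfl⟩ := hb
      exact (hA.1 c (hUsub hc)).image _
    · intro b hb c hc hne
      rw [hCdef] at hb hc
      simp only [Finset.mem_image] at hb hc
      obtain ⟨b', hb', rfl⟩ := hb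
      obtain ⟨c', hc', rfl⟩ := hc
      have hgtb : ∀ x ∈ b', k < x := (Finset.mem_filter.1 hb').2
      have hgtc : ∀ x ∈ c', k < x := (Finset.mem_filter.1 hc').2
      have hne' : b' ≠ c' := by rintro rfl; exact hne rfl
      rw [Finset.disjoint_left]
      intro x hx hx'
      simp only [Finset.mem_image] at hx hx'
      obtain ⟨y, hy, rfl⟩ := hx
      obtain ⟨z, hz, hzy⟩ := hx'
      have := hgtb y hy
      have := hgtc z hz
      have : z = y := by omega
      subst this
      exact Finset.disjoint_left.1 (hA.2.1 b' (hUsub hb') c' (hUsub hc') hne') hy hz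
    · ext x
      simp only [Finset.mem_sup, id, hCdef, Finset.mem_image, ground, Finset.mem_Icc]
      constructor
      · rintro ⟨b, hb, hx⟩
        obtain ⟨c, hc, rfl⟩ := hb
        simp only [Finset.mem_image] at hx
        obtain ⟨y, hy, rfl⟩ := hx
        have hgt : ∀ x ∈ c, k < x := (Finset.mem_filter.1 hc).2
        have h1 := hgt y hy
        have h2 := (part_mem_bounds hA (hUsub hc) hy).2
        omega
      · rintro ⟨h1, h2⟩
        have hx : x + k ∈ ground n := by simp [ground, Finset.mem_Icc]; omega
        rw [← hA.2.2] at hx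
        obtain ⟨b, hb, hxb⟩ := Finset.mem_sup.1 hx
        have hbU : b ∈ U := by
          rw [hUdef, Finset.mem_filter]
          refine ⟨hb, ?_⟩
          rcases hS b hb with h | h
          · exact absurd (h _ hxb) (by omega)
          · exact h
        refine ⟨b.image (· - k), ⟨b, hbU, rfl⟩, ?_⟩
        simp only [Finset.mem_image]
        exact ⟨x + k, hxb, by omega⟩
  have hAeq : A = concatP k B C := by
    rw [concatP, hUshift]
    ext b
    simp only [Finset.mem_union, hBdef, hUdef, Finset.mem_filter]
    constructor
    · intro hb
      rcases hS b hb with h | h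
      · exact Or.inl ⟨hb, h⟩
      · exact Or.inr ⟨hb, h⟩
    · rintro (⟨hb, _⟩ | ⟨hb, _⟩) <;> exact hb
  exact ⟨B, C, hBpart, hCpart, hAeq⟩

/-- Recovery of the factors from a shifted concatenation. -/
lemma concatP_inj (hB : IsSetPartition k B) (hC : IsSetPartition m C)
    {B' C' : Finset (Finset ℕ)} {m' : ℕ}
    (hB' : IsSetPartition k B') (hC' : IsSetPartition m' C')
    (hEq : concatP k B C = concatP k B' C') : B = B' ∧ C = C' := by
  have key : ∀ (D E : Finset (Finset ℕ)) (md : ℕ), IsSetPartition k D → IsSetPartition md E →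
      D = (concatP k D E).filter (fun b => ∀ x ∈ b, x ≤ k) := by
    intro D E md hD hE
    ext b
    simp only [Finset.mem_filter]
    constructor
    · intro hb
      refine ⟨Finset.mem_union_left _ hb, fun x hx => (part_mem_bounds hD hb hx).2⟩
    · rintro ⟨hb, hle⟩
      rcases Finset.mem_union.1 hb with h | h
      · exact h
      · exfalso
        simp only [shiftP, Finset.mem_image] at h
        obtain ⟨c, hc, rfl⟩ := h
        obtain ⟨y, hy⟩ := hE.1 c hc
        have h1 := (part_mem_bounds hE hc hy).1
        have h2 := hle (y + k) (Finset.mem_image_of_mem _ hy)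
        omega
  have hBB : B = B' := by
    rw [key B C m hB hC, hEq, ← key B' C' m' hB' hC']
  have hshift : shiftP k C = shiftP k C' := by
    have h1 : concatP k B C = B ∪ shiftP k C := rfl
    have h2 : concatP k B' C' = B' ∪ shiftP k C' := rfl
    have hd : ∀ (D E : Finset (Finset ℕ)) (md : ℕ), IsSetPartition k D → IsSetPartition md E →
        shiftP k E = (D ∪ shiftP k E) \ D := by
      intro D E md hD hE
      rw [Finset.union_sdiff_cancel_left]
      rw [Finset.disjoint_left]
      intro b hb hb'
      obtain ⟨y, hy⟩ := hD.1 b hb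
      have h1 := (part_mem_bounds hD hb hy).2
      have h2 := (mem_shiftP_elem hE hb' hy).1
      omega
    rw [hd B C m hB hC, hd B' C' m' hB' hC', ← h1, ← h2, hEq, hBB]
  have hCC : C = C' := by
    rw [← unshift_shiftP (k := k) (C := C), hshift, unshift_shiftP]
  exact ⟨hBB, hCC⟩

/-- The partition built from a list of atomic set partitions is a set partition. -/
lemma concatListP_isSetPartition (L : List (ℕ × Finset (Finset ℕ)))
    (hL : ∀ p ∈ L, AtomicP p.1 p.2) :
    IsSetPartition (concatListP L).1 (concatListP L).2 := by
  induction L with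
  | nil =>
    refine ⟨by simp [concatListP], by simp [concatListP], ?_⟩
    simp [concatListP, ground]
  | cons p L ih =>
    have h1 := ih (fun q hq => hL q (List.mem_cons_of_mem _ hq))
    have h2 := (hL p List.mem_cons_self).1
    have := isSetPartition_concatP h2 h1
    rw [Nat.add_comm] at this
    exact this

/-- A smaller split point cannot exist below the first atomic factor. -/
lemma no_smaller_split {k' m' : ℕ} {B' C' : Finset (Finset ℕ)}
    (hB : IsSetPartition k B) (hC : IsSetPartition m C)
    (hB' : AtomicP k' B') (hC' : IsSetPartition m' C')
    (hk : 0 < k) (hlt : k < k')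
    (hEq : concatP k B C = concatP k' B' C') : False := by
  have hS : SplitAt k (concatP k B C) := splitAt_concatP hB hC
  rw [hEq] at hS
  have hSB' : SplitAt k B' := fun b hb => hS b (Finset.mem_union_left _ hb)
  obtain ⟨D, E, hD, hE, hDE⟩ := split_decomp hB'.1 hSB' hk (le_of_lt hlt)
  exact hB'.2.2 ⟨k, D, E, hk, hlt, hD, hE, hDE⟩

/-- Uniqueness of atomic factorizations. -/
lemma atomicFactorization_unique :
    ∀ n : ℕ, ∀ (A : Finset (Finset ℕ)) (L₁ L₂ : List (ℕ × Finset (Finset ℕ))),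
      AtomicFactorization n A L₁ → AtomicFactorization n A L₂ → L₁ = L₂ := by
  intro n
  induction n using Nat.strong_induction_on with
  | _ n ih =>
    intro A L₁ L₂ h₁ h₂
    match L₁, L₂ with
    | [], [] => rfl
    | [], (k, B) :: L₂ =>
      exfalso
      have e1 : (0 : ℕ) = n := congrArg Prod.fst h₁.2
      have e2 := congrArg Prod.fst h₂.2
      have hk : 0 < k := (h₂.1 (k, B) List.mem_cons_self).2.1
      simp only [concatListP] at e2
      omega
    | (k, B) :: L₁, [] =>
      exfalso
      have e1 : (0 : ℕ) = n := congrArg Prod.fst h₂.2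
      have e2 := congrArg Prod.fst h₁.2
      have hk : 0 < k := (h₁.1 (k, B) List.mem_cons_self).2.1
      simp only [concatListP] at e2
      omega
    | (k, B) :: L₁, (k', B') :: L₂ =>
      have hBat : AtomicP k B := h₁.1 (k, B) List.mem_cons_self
      have hB'at : AtomicP k' B' := h₂.1 (k', B') List.mem_cons_self
      have hL₁at : ∀ p ∈ L₁, AtomicP p.1 p.2 := fun p hp => h₁.1 p (List.mem_cons_of_mem _ hp)
      have hL₂at : ∀ p ∈ L₂, AtomicP p.1 p.2 := fun p hp => h₂.1 p (List.mem_cons_of_mem _ hp)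
      have hCpart := concatListP_isSetPartition L₁ hL₁at
      have hC'part := concatListP_isSetPartition L₂ hL₂at
      have e₁ := h₁.2
      have e₂ := h₂.2
      simp only [concatListP] at e₁ e₂
      have hn₁ : (concatListP L₁).1 + k = n := congrArg Prod.fst e₁
      have hn₂ : (concatListP L₂).1 + k' = n := congrArg Prod.fst e₂
      have hA₁ : concatP k B (concatListP L₁).2 = A := congrArg Prod.snd e₁
      have hA₂ : concatP k' B' (concatListP L₂).2 = A := congrArg Prod.snd e₂
      have hEq : concatP k B (concatListP L₁).2 = concatP k' B' (concatListP L₂).2 := by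
        rw [hA₁, hA₂]
      have hkk : k = k' := by
        rcases lt_trichotomy k k' with h | h | h
        · exact absurd (no_smaller_split hBat.1 hCpart hB'at hC'part hBat.2.1 h hEq) id
        · exact h
        · exact absurd (no_smaller_split hB'at.1 hC'part hBat hCpart hB'at.2.1 h hEq.symm) id
      subst hkk
      obtain ⟨hBB, hCC⟩ := concatP_inj hBat.1 hCpart hB'at.1 hC'part hEq
      have hk0 : 0 < k := hBat.2.1
      have hmm : (concatListP L₁).1 = (concatListP L₂).1 := by omega
      have hL : L₁ = L₂ := by
        refine ih (concatListP L₁).1 (by omega) (concatListP L₁).2 L₁ L₂ ⟨hL₁at, rfl⟩ ?_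
        refine ⟨hL₂at, ?_⟩
        rw [hmm, hCC]
      rw [hBB, hL]

/-- Existence of atomic factorizations. -/
lemma atomicFactorization_exists :
    ∀ n : ℕ, ∀ A : Finset (Finset ℕ), IsSetPartition n A →
      ∃ L, AtomicFactorization n A L := by
  intro n
  induction n using Nat.strong_induction_on with
  | _ n ih =>
    intro A hA
    rcases Nat.eq_zero_or_pos n with rfl | hn
    · refine ⟨[], fun p hp => absurd hp List.not_mem_nil, ?_⟩
      have := eq_empty_of_isSetPartition_zero hA
      simp [concatListP, this]
    · classical
      set S : Finset ℕ := (Finset.Icc 1 n).filter (fun k => SplitAt k A) with hSdef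
      have hnS : n ∈ S := by
        rw [hSdef, Finset.mem_filter, Finset.mem_Icc]
        exact ⟨⟨hn, le_refl n⟩, fun b hb => Or.inl fun x hx => (part_mem_bounds hA hb hx).2⟩
      have hSne : S.Nonempty := ⟨n, hnS⟩
      set k := S.min' hSne with hkdef
      have hkS : k ∈ S := S.min'_mem hSne
      rw [hSdef, Finset.mem_filter, Finset.mem_Icc] at hkS
      obtain ⟨⟨hk1, hkn⟩, hkSplit⟩ := hkS
      obtain ⟨B, C, hB, hC, hAeq⟩ := split_decomp hA hkSplit hk1 hkn
      have hBatomic : AtomicP k B := by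
        refine ⟨hB, hk1, ?_⟩
        rintro ⟨j, B', D, hj1, hjk, hB', hD, hBeq⟩
        have hSB : SplitAt j B := by rw [hBeq]; exact splitAt_concatP hB' hD
        have hSA : SplitAt j A := by
          rw [hAeq]
          intro b hb
          rcases Finset.mem_union.1 hb with h | h
          · exact hSB b h
          · exact Or.inr fun x hx => by
              have := (mem_shiftP_elem hC h hx).1; omega
        have hjS : j ∈ S := by
          rw [hSdef, Finset.mem_filter, Finset.mem_Icc]
          exact ⟨⟨hj1, by omega⟩, hSA⟩
        have := S.min'_le j hjS
        omega
      obtain ⟨L', hL'⟩ := ih (n - k) (by omega) C hC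
      refine ⟨(k, B) :: L', ?_, ?_⟩
      · intro p hp
        rcases List.mem_cons.1 hp with rfl | hp
        · exact hBatomic
        · exact hL'.1 p hp
      · simp only [concatListP, hL'.2]
        rw [hAeq]
        congr 1
        omega

end AuxFact

/-- every set partition of `[n]` admits a unique factorization into
atomic set partitions under shifted concatenation. -/
theorem unique_atomic_factorization (n : ℕ) (A : Finset (Finset ℕ))
    (hA : IsSetPartition n A) :
    ∃! L : List (ℕ × Finset (Finset ℕ)), AtomicFactorization n A L := by
  obtain ⟨L, hL⟩ := atomicFactorization_exists n A hA
  exact ⟨L, hL, fun L' hL' => atomicFactorization_unique n A L' L hL' hL⟩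

end
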